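/- Let Λ, β, γ, μ > 0 be constants with R₀ = Λβ/(γ+μ) ≤ 1. Let S, I : ℝ → ℝ be continuously differentiable on [0, ∞) with S'(t) = Λ - S(t) - β·S(t)·I(t) + γ·I(t) and I'(t) = β·S(t)·I(t) - (γ+μ)·I(t) for all t ≥ 0, and S(0) ≥ 0, I(0) ≥ 0. Then S(t) → Λ and I(t) → 0 as t → ∞. -/

import Mathlib

open Set Filter Real

/-- If `f` is continuous on `[a,b]`, differentiable with nonpositive derivative on `(a,b)`,
then `f b ≤ f a`. -/
private lemma sis_decr_aux {f f' : ℝ → ℝ} {a b : ℝ} (hab : a ≤ b)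
    (hc : ContinuousOn f (Set.Icc a b))
    (hd : ∀ t ∈ Set.Ioo a b, HasDerivAt f (f' t) t)
    (h0 : ∀ t ∈ Set.Ioo a b, f' t ≤ 0) : f b ≤ f a := by
  have h := antitoneOn_of_hasDerivWithinAt_nonpos (convex_Icc a b) hc
    (fun x hx => ((hd x (by rwa [interior_Icc] at hx)).hasDerivWithinAt))
    (fun x hx => h0 x (by rwa [interior_Icc] at hx))
  exact h (left_mem_Icc.2 hab) (right_mem_Icc.2 hab) hab

set_option maxHeartbeats 1600000 in
/-- Homogeneous SIS system with mass action and linear birth-death: if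
`R₀ = Λβ/(γ+μ) ≤ 1`, the disease-free equilibrium `(Λ, 0)` is globally
attractive. -/
theorem stmt_7 (Λ β γ μ : ℝ) (hΛ : 0 < Λ) (hβ : 0 < β) (hγ : 0 < γ) (hμ : 0 < μ)
    (hR0 : Λ * β / (γ + μ) ≤ 1) (S I : ℝ → ℝ)
    (hS : ∀ t ∈ Set.Ici (0 : ℝ),
      HasDerivWithinAt S (Λ - S t - β * S t * I t + γ * I t) (Set.Ici 0) t)
    (hI : ∀ t ∈ Set.Ici (0 : ℝ),
      HasDerivWithinAt I (β * S t * I t - (γ + μ) * I t) (Set.Ici 0) t)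
    (hSc : ContinuousOn (fun t => Λ - S t - β * S t * I t + γ * I t) (Set.Ici 0))
    (hIc : ContinuousOn (fun t => β * S t * I t - (γ + μ) * I t) (Set.Ici 0))
    (hS0 : 0 ≤ S 0) (hI0 : 0 ≤ I 0) :
    Filter.Tendsto S Filter.atTop (nhds Λ) ∧
      Filter.Tendsto I Filter.atTop (nhds 0) := by
  have hc0 : (0:ℝ) < γ + μ := by linarith
  have hβΛ : Λ * β ≤ γ + μ := by rwa [div_le_one hc0] at hR0
  -- continuity of the solutions
  have hScont : ContinuousOn S (Set.Ici (0:ℝ)) := fun t ht => (hS t ht).continuousWithinAt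
  have hIcont : ContinuousOn I (Set.Ici (0:ℝ)) := fun t ht => (hI t ht).continuousWithinAt
  -- genuine derivatives at interior points
  have hSd : ∀ t : ℝ, 0 < t → HasDerivAt S (Λ - S t - β * S t * I t + γ * I t) t :=
    fun t ht => (hS t ht.le).hasDerivAt (Ici_mem_nhds ht)
  have hId : ∀ t : ℝ, 0 < t → HasDerivAt I (β * S t * I t - (γ + μ) * I t) t :=
    fun t ht => (hI t ht.le).hasDerivAt (Ici_mem_nhds ht)
  -- Step 1 : I is nonnegative on [0, ∞)
  have hInn : ∀ t : ℝ, 0 ≤ t → 0 ≤ I t := by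
    intro t1 ht1
    by_contra hneg
    push_neg at hneg
    have hIccsub : Set.Icc (0:ℝ) t1 ⊆ Set.Ici 0 := fun x hx => hx.1
    have hAclosed : IsClosed (Set.Icc 0 t1 ∩ I ⁻¹' Set.Ici 0) :=
      (hIcont.mono hIccsub).preimage_isClosed_of_isClosed isClosed_Icc isClosed_Ici
    have hAne : (Set.Icc 0 t1 ∩ I ⁻¹' Set.Ici 0).Nonempty := ⟨0, ⟨le_refl 0, ht1⟩, hI0⟩
    have hAbdd : BddAbove (Set.Icc 0 t1 ∩ I ⁻¹' Set.Ici 0) := ⟨t1, fun x hx => hx.1.2⟩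
    have ht0A : sSup (Set.Icc 0 t1 ∩ I ⁻¹' Set.Ici 0) ∈ Set.Icc 0 t1 ∩ I ⁻¹' Set.Ici 0 :=
      hAclosed.csSup_mem hAne hAbdd
    set t0 := sSup (Set.Icc 0 t1 ∩ I ⁻¹' Set.Ici 0) with ht0def
    have ht00 : 0 ≤ t0 := ht0A.1.1
    have ht0t1 : t0 ≤ t1 := ht0A.1.2
    have hIt0 : 0 ≤ I t0 := ht0A.2
    have ht0ne : t0 ≠ t1 := by
      intro h
      rw [h] at hIt0
      exact absurd hIt0 (not_le.2 hneg)
    have ht0lt : t0 < t1 := lt_of_le_of_ne ht0t1 ht0ne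
    have hneg' : ∀ t, t0 < t → t ≤ t1 → I t < 0 := by
      intro t ht0t htt1
      by_contra h
      push_neg at h
      have hmem : t ∈ Set.Icc 0 t1 ∩ I ⁻¹' Set.Ici 0 := ⟨⟨le_trans ht00 ht0t.le, htt1⟩, h⟩
      exact absurd (le_csSup hAbdd hmem) (not_le.2 ht0t)
    have hIt0' : I t0 ≤ 0 := by
      have cw : ContinuousWithinAt I (Set.Ioi t0) t0 :=
        (hIcont t0 ht00).mono (fun x hx => le_trans ht00 (le_of_lt hx))
      refine le_of_tendsto cw ?_
      filter_upwards [Ioc_mem_nhdsGT ht0lt] with t ht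
      exact (hneg' t ht.1 ht.2).le
    have hIt00 : I t0 = 0 := le_antisymm hIt0' hIt0
    -- Grönwall on [t0, t1]
    have hsub : Set.Icc t0 t1 ⊆ Set.Ici (0:ℝ) := fun x hx => le_trans ht00 hx.1
    obtain ⟨K, hK⟩ := (isCompact_Icc (a := t0) (b := t1)).exists_bound_of_continuousOn
      (f := fun x => β * S x - (γ + μ))
      ((continuousOn_const.mul (hScont.mono hsub)).sub continuousOn_const)
    have hb := norm_le_gronwallBound_of_norm_deriv_right_le (f := I)
      (f' := fun x => β * S x * I x - (γ + μ) * I x) (δ := 0) (K := K) (ε := 0)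
      (hIcont.mono hsub)
      (fun x hx => (hI x (le_trans ht00 hx.1)).mono (Set.Ici_subset_Ici.2 (le_trans ht00 hx.1)))
      (by simp [hIt00])
      (fun x hx => by
        show ‖β * S x * I x - (γ + μ) * I x‖ ≤ K * ‖I x‖ + 0
        have he : β * S x * I x - (γ + μ) * I x = (β * S x - (γ + μ)) * I x := by ring
        rw [he, norm_mul, add_zero]
        exact mul_le_mul_of_nonneg_right (hK x (Set.Ico_subset_Icc_self hx)) (norm_nonneg _))
      t1 (Set.right_mem_Icc.2 ht0lt.le)
    rw [gronwallBound_ε0, zero_mul] at hb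
    rw [Real.norm_eq_abs, abs_of_neg hneg] at hb
    linarith
  -- The Lyapunov function V and its derivative DV
  set V : ℝ → ℝ := fun t => β / 2 * (S t + I t - Λ)^2 + (1 + μ) * I t with hVdef
  set DV : ℝ → ℝ := fun t => β * (S t + I t - Λ) * (Λ - S t - μ * I t)
      + (1 + μ) * (β * S t * I t - (γ + μ) * I t) with hDVdef
  have hVd : ∀ t : ℝ, 0 < t → HasDerivAt V (DV t) t := by
    intro t ht
    have hP : HasDerivAt (fun u => S u + I u - Λ)
        ((Λ - S t - β * S t * I t + γ * I t) + (β * S t * I t - (γ + μ) * I t)) t :=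
      ((hSd t ht).add (hId t ht)).sub_const Λ
    have hP2 := hP.pow 2
    have h1 := (hP2.const_mul (β / 2)).add ((hId t ht).const_mul (1 + μ))
    refine HasDerivAt.congr_deriv (h1 : HasDerivAt V _ t) ?_
    symm
    show β * (S t + I t - Λ) * (Λ - S t - μ * I t)
        + (1 + μ) * (β * S t * I t - (γ + μ) * I t) = _
    push_cast
    ring
  have hDVle : ∀ t : ℝ, 0 ≤ t → DV t ≤ -β * ((S t - Λ)^2 + μ * (I t)^2) := by
    intro t ht
    have hIt := hInn t ht
    have key : DV t = -β * ((S t - Λ)^2 + μ * (I t)^2)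
        - (1 + μ) * (I t) * ((γ + μ) - Λ * β) := by
      show β * (S t + I t - Λ) * (Λ - S t - μ * I t)
        + (1 + μ) * (β * S t * I t - (γ + μ) * I t) = _
      ring
    have hnn : 0 ≤ (1 + μ) * (I t) * ((γ + μ) - Λ * β) :=
      mul_nonneg (mul_nonneg (by linarith) hIt) (by linarith)
    rw [key]
    linarith
  have hDVnonpos : ∀ t : ℝ, 0 ≤ t → DV t ≤ 0 := by
    intro t ht
    have h1 := hDVle t ht
    have h2 : 0 ≤ (S t - Λ)^2 + μ * (I t)^2 := by positivity
    nlinarith [mul_nonneg hβ.le h2]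
  -- continuity of V
  have hVcont : ContinuousOn V (Set.Ici (0:ℝ)) := by
    show ContinuousOn (fun t => β / 2 * (S t + I t - Λ)^2 + (1 + μ) * I t) (Set.Ici (0:ℝ))
    exact (continuousOn_const.mul (((hScont.add hIcont).sub continuousOn_const).pow 2)).add
      (continuousOn_const.mul hIcont)
  -- V is nonnegative
  have hVnn : ∀ t : ℝ, 0 ≤ t → 0 ≤ V t := by
    intro t ht
    have hIt := hInn t ht
    show (0:ℝ) ≤ β / 2 * (S t + I t - Λ)^2 + (1 + μ) * I t
    nlinarith [sq_nonneg (S t + I t - Λ), hβ.le, hμ.le]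
  -- V is antitone on [0, ∞)
  have hVanti : AntitoneOn V (Set.Ici (0:ℝ)) := by
    apply antitoneOn_of_hasDerivWithinAt_nonpos (convex_Ici 0) hVcont (f' := DV)
    · intro x hx
      rw [interior_Ici] at hx
      exact (hVd x hx).hasDerivWithinAt
    · intro x hx
      rw [interior_Ici] at hx
      exact hDVnonpos x hx.le
  -- key smallness claim : V eventually drops below any positive level
  have hVsmall : ∀ L : ℝ, 0 < L → ∃ T : ℝ, 0 ≤ T ∧ V T ≤ L := by
    intro L hL
    by_contra h
    push_neg at h
    set r : ℝ := min 1 (L / (2 * β + 1 + μ)) with hrdef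
    have hr0 : 0 < r := lt_min one_pos (by positivity)
    have hr1 : r ≤ 1 := min_le_left _ _
    have hrL : (2 * β + 1 + μ) * r ≤ L := by
      have h2 : r ≤ L / (2 * β + 1 + μ) := min_le_right _ _
      calc (2 * β + 1 + μ) * r ≤ (2 * β + 1 + μ) * (L / (2 * β + 1 + μ)) :=
            mul_le_mul_of_nonneg_left h2 (by positivity)
        _ = L := by field_simp
    set δ : ℝ := min (β * r) (β * μ * r^2) with hδdef
    have hδ0 : 0 < δ := lt_min (by positivity) (by positivity)
    -- at every nonnegative time, DV ≤ -δ
    have hdrop : ∀ t : ℝ, 0 ≤ t → DV t ≤ -δ := by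
      intro t ht
      have hIt := hInn t ht
      have hVb : L < V t := h t ht
      have hcase : r ≤ (S t - Λ)^2 ∨ r ≤ I t := by
        by_contra hcon
        push_neg at hcon
        obtain ⟨h1, h2⟩ := hcon
        have e1 : (I t)^2 ≤ r := by nlinarith
        have e2 : (S t + I t - Λ)^2 ≤ 4 * r := by nlinarith [sq_nonneg (S t - Λ - I t)]
        have e3 : β / 2 * (S t + I t - Λ)^2 ≤ 2 * β * r := by nlinarith [hβ.le]
        have e4 : (1 + μ) * I t ≤ (1 + μ) * r := by nlinarith [hμ.le]
        have e5 : V t ≤ (2 * β + 1 + μ) * r := by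
          have : V t = β / 2 * (S t + I t - Λ)^2 + (1 + μ) * I t := rfl
          rw [this]; linarith
        linarith
      have hmain := hDVle t ht
      rcases hcase with hcase | hcase
      · have m1 : β * r ≤ β * (S t - Λ)^2 := mul_le_mul_of_nonneg_left hcase hβ.le
        have m2 : 0 ≤ β * (μ * (I t)^2) := by positivity
        have m3 : δ ≤ β * r := min_le_left _ _
        nlinarith
      · have m1 : r^2 ≤ (I t)^2 := by nlinarith
        have m2 : β * μ * r^2 ≤ β * μ * (I t)^2 :=
          mul_le_mul_of_nonneg_left m1 (by positivity)
        have m3 : 0 ≤ β * (S t - Λ)^2 := by positivity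
        have m4 : δ ≤ β * μ * r^2 := min_le_right _ _
        nlinarith
    -- linear decay contradiction
    have hV0 : 0 ≤ V 0 := hVnn 0 le_rfl
    have hb0 : (0:ℝ) ≤ V 0 / δ + 1 := by
      have := div_nonneg hV0 hδ0.le
      linarith
    have key := sis_decr_aux (f := fun t => V t + δ * t) (f' := fun t => DV t + δ)
      (a := 0) (b := V 0 / δ + 1) hb0
      ((hVcont.mono (fun x hx => hx.1)).add (continuousOn_const.mul continuousOn_id))
      (fun t htm => (hVd t htm.1).add (by simpa using (hasDerivAt_id t).const_mul δ))
      (fun t htm => by show DV t + δ ≤ 0; linarith [hdrop t htm.1.le])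
    have heq : δ * (V 0 / δ + 1) = V 0 + δ := by field_simp
    have hVb0 : 0 ≤ V (V 0 / δ + 1) := hVnn _ hb0
    simp only [mul_zero, add_zero] at key
    linarith
  -- strengthen : V stays below any positive level eventually
  have hVsmall' : ∀ L : ℝ, 0 < L → ∃ T : ℝ, 0 ≤ T ∧ ∀ t, T ≤ t → V t ≤ L := by
    intro L hL
    obtain ⟨T, hT0, hVT⟩ := hVsmall L hL
    exact ⟨T, hT0, fun t ht =>
      le_trans (hVanti (Set.mem_Ici.2 hT0) (Set.mem_Ici.2 (le_trans hT0 ht)) ht) hVT⟩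
  -- I ≤ V pointwise
  have hIleV : ∀ t : ℝ, 0 ≤ t → I t ≤ V t := by
    intro t ht
    have hIt := hInn t ht
    show I t ≤ β / 2 * (S t + I t - Λ)^2 + (1 + μ) * I t
    nlinarith [sq_nonneg (S t + I t - Λ), hβ.le, hμ.le]
  -- conclusion for I
  have hItend : Filter.Tendsto I Filter.atTop (nhds 0) := by
    rw [Metric.tendsto_atTop]
    intro ε hε
    obtain ⟨T, hT0, hVT⟩ := hVsmall' (ε / 2) (by positivity)
    refine ⟨T, fun t ht => ?_⟩
    have ht0 : 0 ≤ t := le_trans hT0 ht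
    have h1 : I t ≤ ε / 2 := le_trans (hIleV t ht0) (hVT t ht)
    rw [Real.dist_eq, sub_zero, abs_of_nonneg (hInn t ht0)]
    linarith
  refine ⟨?_, hItend⟩
  -- conclusion for S
  rw [Metric.tendsto_atTop]
  intro ε hε
  have hL0 : 0 < min (β * (ε / 4)^2 / 2) (ε / 4) := lt_min (by positivity) (by positivity)
  obtain ⟨T, hT0, hVT⟩ := hVsmall' _ hL0
  refine ⟨T, fun t ht => ?_⟩
  have ht0 : 0 ≤ t := le_trans hT0 ht
  have hVt := hVT t ht
  have hIt := hInn t ht0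
  have hI4 : I t ≤ ε / 4 :=
    le_trans (le_trans (hIleV t ht0) hVt) (min_le_right _ _)
  have hP2 : (S t + I t - Λ)^2 ≤ (ε / 4)^2 := by
    have h1 : β / 2 * (S t + I t - Λ)^2 ≤ V t := by
      show β / 2 * (S t + I t - Λ)^2 ≤ β / 2 * (S t + I t - Λ)^2 + (1 + μ) * I t
      nlinarith [hμ.le]
    have h2 : V t ≤ β * (ε / 4)^2 / 2 := le_trans hVt (min_le_left _ _)
    nlinarith
  have hPabs : |S t + I t - Λ| ≤ ε / 4 := by
    rw [abs_le]
    constructor <;> nlinarith [abs_nonneg (S t + I t - Λ), hε.le]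
  rw [Real.dist_eq]
  have htri : |S t - Λ| ≤ |S t + I t - Λ| + |I t| := by
    have h := abs_add_le (S t + I t - Λ) (-(I t))
    rw [abs_neg] at h
    have he : S t + I t - Λ + -(I t) = S t - Λ := by ring
    rwa [he] at h
  have hIabs : |I t| ≤ ε / 4 := by rwa [abs_of_nonneg hIt]
  linarith
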